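/- For every positive integer k, the function f_k(x) = Σ_{i=0}^{k-1} (k-i)·x^i/i! - x·e^x has exactly one root in the open interval (0, ∞). -/

import Mathlib

open Real Finset

noncomputable def Ef (j : ℕ) (x : ℝ) : ℝ := ∑ i ∈ Finset.range j, x ^ i / (Nat.factorial i)

noncomputable def Pf (k : ℕ) (x : ℝ) : ℝ :=
  ∑ i ∈ Finset.range k, ((k - i : ℕ) : ℝ) * x ^ i / (Nat.factorial i)

lemma Ef_hasDerivAt (j : ℕ) (x : ℝ) : HasDerivAt (Ef (j+1)) (Ef j x) x := by
  induction j with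
  | zero =>
      have h : HasDerivAt (fun _ : ℝ => (1:ℝ)) 0 x := hasDerivAt_const x 1
      have hfun : Ef 1 = fun _ : ℝ => (1:ℝ) := by funext y; simp [Ef]
      rw [hfun, show Ef 0 x = 0 from by simp [Ef]]
      exact h
  | succ n ih =>
      have h0 : (Nat.factorial n : ℝ) ≠ 0 := Nat.cast_ne_zero.2 (Nat.factorial_ne_zero n)
      have h1 : HasDerivAt (fun y : ℝ => y ^ (n+1) / (Nat.factorial (n+1)))
          (x ^ n / (Nat.factorial n)) x := by
        have h := (hasDerivAt_pow (n+1) x).div_const ((Nat.factorial (n+1) : ℝ))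
        simp only [Nat.add_sub_cancel] at h
        have he : ((n:ℝ)+1) * x ^ n / (Nat.factorial (n+1) : ℝ)
            = x ^ n / (Nat.factorial n) := by
          rw [Nat.factorial_succ]
          push_cast
          field_simp
        rw [← he]
        exact_mod_cast h
      have hfun : Ef (n+2) = fun y : ℝ => Ef (n+1) y + y ^ (n+1) / (Nat.factorial (n+1)) := by
        funext y; simp [Ef, Finset.sum_range_succ]
      rw [hfun, show Ef (n+1) x = Ef n x + x ^ n / (Nat.factorial n) from by
        simp [Ef, Finset.sum_range_succ]]
      exact ih.add h1

lemma Pf_eq (k : ℕ) (x : ℝ) : Pf k x = ∑ j ∈ Finset.range k, Ef (j+1) x := by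
  induction k with
  | zero => simp [Pf]
  | succ n ih =>
      rw [Finset.sum_range_succ, ← ih]
      have hsplit : Pf (n+1) x = Pf n x + Ef (n+1) x := by
        unfold Pf Ef
        have hcg : ∀ i ∈ Finset.range n,
            ((n + 1 - i : ℕ) : ℝ) * x ^ i / (Nat.factorial i)
            = ((n - i : ℕ) : ℝ) * x ^ i / (Nat.factorial i) + x ^ i / (Nat.factorial i) := by
          intro i hi
          have hi' : i < n := Finset.mem_range.mp hi
          have : n + 1 - i = (n - i) + 1 := by omega
          rw [this]; push_cast; ring
        rw [Finset.sum_range_succ, Finset.sum_range_succ,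
          Finset.sum_congr rfl hcg, Finset.sum_add_distrib]
        simp
        ring
      rw [hsplit]

lemma Pf_hasDerivAt (k : ℕ) (x : ℝ) :
    HasDerivAt (Pf k) (Pf k x - Ef k x) x := by
  have hterms : ∀ j ∈ Finset.range k, HasDerivAt (fun y => Ef (j+1) y) (Ef j x) x :=
    fun j _ => Ef_hasDerivAt j x
  have hsum := HasDerivAt.fun_sum hterms
  have hfun : Pf k = fun y => ∑ j ∈ Finset.range k, Ef (j+1) y := by
    funext y; exact Pf_eq k y
  have htel : ∑ j ∈ Finset.range k, Ef j x = Pf k x - Ef k x := by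
    have h1 : ∑ j ∈ Finset.range k, (Ef (j+1) x - Ef j x) = Ef k x - Ef 0 x :=
      Finset.sum_range_sub (fun j => Ef j x) k
    rw [Finset.sum_sub_distrib, ← Pf_eq] at h1
    have h0 : Ef 0 x = 0 := by simp [Ef]
    rw [h0] at h1
    linarith
  rw [← htel, hfun]
  exact hsum

lemma g_hasDerivAt (k : ℕ) (x : ℝ) :
    HasDerivAt (fun y => Pf k y * Real.exp (-y) - y)
      (-(Ef k x * Real.exp (-x)) - 1) x := by
  have hexp : HasDerivAt (fun y : ℝ => Real.exp (-y)) (-Real.exp (-x)) x := by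
    have h := ((hasDerivAt_id x).neg).exp
    simpa using h
  have h := ((Pf_hasDerivAt k x).mul hexp).sub (hasDerivAt_id x)
  have e : -(Ef k x * Real.exp (-x)) - 1
      = (Pf k x - Ef k x) * Real.exp (-x) + Pf k x * -Real.exp (-x) - 1 := by ring
  rw [e]; exact h

lemma Ef_nonneg (k : ℕ) {x : ℝ} (hx : 0 ≤ x) : 0 ≤ Ef k x := by
  apply Finset.sum_nonneg
  intro i _
  positivity

/-- For every positive integer `k`, the function
`f_k(x) = ∑_{i=0}^{k-1} (k-i) x^i / i! - x e^x` has exactly one root in `(0, ∞)`. -/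
theorem stmt_4 (k : ℕ) (hk : 0 < k) :
    ∃! x : ℝ, x ∈ Set.Ioi (0 : ℝ) ∧
      (∑ i ∈ Finset.range k, ((k - i : ℕ) : ℝ) * x ^ i / (Nat.factorial i))
        - x * Real.exp x = 0 := by
  set g : ℝ → ℝ := fun y => Pf k y * Real.exp (-y) - y with hgdef
  -- roots of f on Ioi 0 = roots of g
  have hiff : ∀ x : ℝ,
      ((∑ i ∈ Finset.range k, ((k - i : ℕ) : ℝ) * x ^ i / (Nat.factorial i))
        - x * Real.exp x = 0) ↔ g x = 0 := by
    intro x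
    have hkey : g x = Real.exp (-x) * (Pf k x - x * Real.exp x) := by
      rw [hgdef]
      simp only [Real.exp_neg]
      field_simp
    constructor
    · intro h
      rw [hkey]
      have : Pf k x - x * Real.exp x = 0 := h
      rw [this, mul_zero]
    · intro h
      rw [hkey] at h
      rcases mul_eq_zero.mp h with h' | h'
      · exact absurd h' (Real.exp_ne_zero _)
      · exact h'
  have hcont : Continuous g := by
    rw [continuous_iff_continuousAt]
    exact fun x => (g_hasDerivAt k x).continuousAt
  -- strict antitone on Ici 0
  have hanti : StrictAntiOn g (Set.Ici (0:ℝ)) := by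
    apply strictAntiOn_of_deriv_neg (convex_Ici 0) hcont.continuousOn
    intro x hx
    rw [interior_Ici] at hx
    rw [(g_hasDerivAt k x).deriv]
    have h1 : 0 ≤ Ef k x * Real.exp (-x) :=
      mul_nonneg (Ef_nonneg k (le_of_lt hx)) (Real.exp_pos _).le
    linarith
  -- g 0 = k
  have hg0 : g 0 = k := by
    rw [hgdef]
    simp only [neg_zero, Real.exp_zero, mul_one, sub_zero]
    unfold Pf
    rw [Finset.sum_eq_single_of_mem 0 (Finset.mem_range.mpr hk)]
    · simp
    · intro i _ hi
      simp [zero_pow hi]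
  -- g x ≤ k - x on Ici 0
  have hub : ∀ x : ℝ, 0 ≤ x → g x ≤ k - x := by
    intro x hx
    have h1 : Pf k x ≤ (k : ℝ) * Ef k x := by
      unfold Pf Ef
      rw [Finset.mul_sum]
      apply Finset.sum_le_sum
      intro i _
      have h2 : ((k - i : ℕ) : ℝ) ≤ (k : ℝ) := by
        exact_mod_cast Nat.sub_le k i
      have h3 : 0 ≤ x ^ i / (Nat.factorial i) := by positivity
      calc ((k - i : ℕ) : ℝ) * x ^ i / (Nat.factorial i)
          = ((k - i : ℕ) : ℝ) * (x ^ i / (Nat.factorial i)) := by ring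
        _ ≤ (k : ℝ) * (x ^ i / (Nat.factorial i)) := by
            exact mul_le_mul_of_nonneg_right h2 h3
    have h4 : Ef k x ≤ Real.exp x := by
      unfold Ef
      exact Real.sum_le_exp_of_nonneg hx k
    have h5 : Pf k x * Real.exp (-x) ≤ (k : ℝ) * Ef k x * Real.exp (-x) :=
      mul_le_mul_of_nonneg_right h1 (Real.exp_pos _).le
    have h6 : (k : ℝ) * Ef k x * Real.exp (-x) ≤ (k : ℝ) * Real.exp x * Real.exp (-x) := by
      have : (k : ℝ) * Ef k x ≤ (k : ℝ) * Real.exp x :=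
        mul_le_mul_of_nonneg_left h4 (by positivity)
      exact mul_le_mul_of_nonneg_right this (Real.exp_pos _).le
    have h7 : (k : ℝ) * Real.exp x * Real.exp (-x) = k := by
      rw [mul_assoc, ← Real.exp_add]
      simp
    rw [hgdef]
    simp only
    nlinarith
  -- negative at k+1
  have hneg : g ((k : ℝ) + 1) < 0 := by
    have := hub ((k:ℝ)+1) (by positivity)
    linarith
  have hpos : 0 < g 0 := by rw [hg0]; exact_mod_cast hk
  -- IVT
  have hiv : (0:ℝ) ∈ Set.Icc (g ((k:ℝ)+1)) (g 0) := ⟨le_of_lt hneg, le_of_lt hpos⟩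
  obtain ⟨x₀, hx₀mem, hx₀⟩ :=
    intermediate_value_Icc' (by positivity : (0:ℝ) ≤ (k:ℝ)+1) hcont.continuousOn hiv
  have hx₀pos : 0 < x₀ := by
    rcases lt_or_eq_of_le hx₀mem.1 with h | h
    · exact h
    · exfalso; rw [← h] at hx₀; rw [hx₀] at hpos; exact lt_irrefl 0 hpos
  refine ⟨x₀, ⟨hx₀pos, (hiff x₀).mpr hx₀⟩, ?_⟩
  rintro y ⟨hy, hyroot⟩
  have hgy : g y = 0 := (hiff y).mp hyroot
  have hmemy : y ∈ Set.Ici (0:ℝ) := Set.mem_Ici.mpr (le_of_lt hy)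
  have hmemx : x₀ ∈ Set.Ici (0:ℝ) := Set.mem_Ici.mpr (le_of_lt hx₀pos)
  exact hanti.injOn hmemy hmemx (by rw [hgy, hx₀])
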